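/- Let k ≥ 1 be an integer with 3k ≤ n, and set m = 2k. Then R(m), the set of all roots of D_{n+1} whose height is divisible by m, is not of Levi type: for every element w of the Weyl group W and every subset S of the simple roots {α_0, α_1,…,α_n}, the image of R(m) under w is not equal to R ∩ span_ℝ(S). -/
import Mathlib

noncomputable section

/-- The standard basis vector `ε_i` of `ℝ^{n+1}` (indices `0, 1, …, n`). -/
def eps (N : ℕ) (i : Fin N) : Fin N → ℝ := fun j => if j = i then 1 else 0

/-- The root system of type `D_{n+1}`. -/
def Droots (n : ℕ) : Set (Fin (n + 1) → ℝ) :=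
  {v | ∃ i j : Fin (n + 1), i < j ∧
        (v = eps (n + 1) j - eps (n + 1) i ∨ v = -(eps (n + 1) j - eps (n + 1) i) ∨
         v = eps (n + 1) j + eps (n + 1) i ∨ v = -(eps (n + 1) j + eps (n + 1) i))}

/-- The height functional for type `D_{n+1}`. -/
def htD (n : ℕ) (v : Fin (n + 1) → ℝ) : ℝ := ∑ i : Fin (n + 1), v i * (i : ℝ)

/-- The simple roots of `D_{n+1}`: `α_0 = ε_1 + ε_0` and `α_i = ε_i − ε_{i−1}`
for `1 ≤ i ≤ n`. -/
def DsimpleSet (n : ℕ) : Set (Fin (n + 1) → ℝ) :=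
  {v | (∃ i j : Fin (n + 1), (i : ℕ) = 0 ∧ (j : ℕ) = 1 ∧ v = eps (n + 1) j + eps (n + 1) i) ∨
       (∃ i j : Fin (n + 1), (j : ℕ) = (i : ℕ) + 1 ∧ v = eps (n + 1) j - eps (n + 1) i)}

/-- The Weyl group of `D_{n+1}`: the subgroup of `GL(ℝ^{n+1})` (realized as linear
automorphisms of `ℝ^{n+1}`) generated by the reflections
`s_γ : v ↦ v − (2⟨v,γ⟩/⟨γ,γ⟩)γ` for roots `γ`. -/
def DWeyl (n : ℕ) : Subgroup ((Fin (n + 1) → ℝ) ≃ₗ[ℝ] (Fin (n + 1) → ℝ)) :=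
  Subgroup.closure {σ | ∃ γ ∈ Droots n,
    ∀ v, σ v = v - ((2 * ∑ i, v i * γ i) / (∑ i, γ i * γ i)) • γ}

set_option maxHeartbeats 1000000

namespace Stmt10Aux

variable {N : ℕ}

/-- characterization predicate for roots of `D`-type lattices. -/
def IsRt (N : ℕ) (v : Fin N → ℝ) : Prop :=
  ∃ i j : Fin N, i ≠ j ∧ ∃ s t : ℝ, (s = 1 ∨ s = -1) ∧ (t = 1 ∨ t = -1) ∧
    v = s • eps N i + t • eps N j

lemma sum_mul_gamma (i j : Fin N) (hij : i ≠ j) (s t : ℝ) (v : Fin N → ℝ) :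
    ∑ l, v l * (s • eps N i + t • eps N j) l = s * v i + t * v j := by
  have h : ∀ l : Fin N, v l * (s • eps N i + t • eps N j) l
      = (if l = i then s * v i else 0) + (if l = j then t * v j else 0) := by
    intro l
    by_cases h1 : l = i
    · by_cases h2 : l = j
      · exact absurd (h1.symm.trans h2) hij
      · subst h1; simp [eps, h2, hij]; ring
    · by_cases h2 : l = j
      · subst h2; simp [eps, h1]; ring
      · simp [eps, h1, h2]
  rw [Finset.sum_congr rfl fun l _ => h l, Finset.sum_add_distrib]
  simp

lemma gamma_apply_i (i j : Fin N) (hij : i ≠ j) (s t : ℝ) :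
    (s • eps N i + t • eps N j) i = s := by simp [eps, hij]

lemma gamma_apply_j (i j : Fin N) (hij : i ≠ j) (s t : ℝ) :
    (s • eps N i + t • eps N j) j = t := by simp [eps, Ne.symm hij]

lemma gamma_sq (i j : Fin N) (hij : i ≠ j) (s t : ℝ)
    (hs : s = 1 ∨ s = -1) (ht : t = 1 ∨ t = -1) :
    ∑ l, (s • eps N i + t • eps N j) l * (s • eps N i + t • eps N j) l = 2 := by
  rw [sum_mul_gamma i j hij, gamma_apply_i i j hij, gamma_apply_j i j hij]
  rcases hs with rfl | rfl <;> rcases ht with rfl | rfl <;> norm_num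

lemma refl_isRt (i j : Fin N) (hij : i ≠ j) (s t : ℝ)
    (hs : s = 1 ∨ s = -1) (ht : t = 1 ∨ t = -1) (u : Fin N → ℝ) (hu : IsRt N u) :
    IsRt N (u - (s * u i + t * u j) • (s • eps N i + t • eps N j)) := by
  obtain ⟨p, q, hpq, a, b, ha, hb, rfl⟩ := hu
  by_cases hpi : p = i
  · subst hpi
    by_cases hqj : q = j
    · subst hqj
      refine ⟨p, q, hpq, -(s*t)*b, -(s*t)*a, ?_, ?_, ?_⟩
      · rcases hs with rfl|rfl <;> rcases ht with rfl|rfl <;> rcases hb with rfl|rfl <;> norm_num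
      · rcases hs with rfl|rfl <;> rcases ht with rfl|rfl <;> rcases ha with rfl|rfl <;> norm_num
      · funext l
        simp only [Pi.add_apply, Pi.sub_apply, Pi.smul_apply, smul_eq_mul, eps]
        split_ifs <;>
          first
            | ring1
            | (rcases hs with rfl|rfl <;> rcases ht with rfl|rfl <;> ring1)
            | simp_all
    · refine ⟨j, q, fun h => hqj h.symm, -(s*t)*a, b, ?_, hb, ?_⟩
      · rcases hs with rfl|rfl <;> rcases ht with rfl|rfl <;> rcases ha with rfl|rfl <;> norm_num
      · funext l
        simp only [Pi.add_apply, Pi.sub_apply, Pi.smul_apply, smul_eq_mul, eps]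
        split_ifs <;>
          first
            | ring1
            | (rcases hs with rfl|rfl <;> rcases ht with rfl|rfl <;> ring1)
            | simp_all
  · by_cases hpj : p = j
    · subst hpj
      by_cases hqi : q = i
      · subst hqi
        refine ⟨q, p, fun h => hpq h.symm, -(s*t)*a, -(s*t)*b, ?_, ?_, ?_⟩
        · rcases hs with rfl|rfl <;> rcases ht with rfl|rfl <;> rcases ha with rfl|rfl <;> norm_num
        · rcases hs with rfl|rfl <;> rcases ht with rfl|rfl <;> rcases hb with rfl|rfl <;> norm_num
        · funext l
          simp only [Pi.add_apply, Pi.sub_apply, Pi.smul_apply, smul_eq_mul, eps]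
          split_ifs <;>
            first
              | ring1
              | (rcases hs with rfl|rfl <;> rcases ht with rfl|rfl <;> ring1)
              | simp_all
      · refine ⟨i, q, fun h => hqi h.symm, -(s*t)*a, b, ?_, hb, ?_⟩
        · rcases hs with rfl|rfl <;> rcases ht with rfl|rfl <;> rcases ha with rfl|rfl <;> norm_num
        · funext l
          simp only [Pi.add_apply, Pi.sub_apply, Pi.smul_apply, smul_eq_mul, eps]
          split_ifs <;>
            first
              | ring1
              | (rcases hs with rfl|rfl <;> rcases ht with rfl|rfl <;> ring1)
              | simp_all
    · by_cases hqi : q = i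
      · subst hqi
        refine ⟨p, j, hpj, a, -(s*t)*b, ha, ?_, ?_⟩
        · rcases hs with rfl|rfl <;> rcases ht with rfl|rfl <;> rcases hb with rfl|rfl <;> norm_num
        · funext l
          simp only [Pi.add_apply, Pi.sub_apply, Pi.smul_apply, smul_eq_mul, eps]
          split_ifs <;>
            first
              | ring1
              | (rcases hs with rfl|rfl <;> rcases ht with rfl|rfl <;> ring1)
              | simp_all
      · by_cases hqj : q = j
        · subst hqj
          refine ⟨p, i, hpi, a, -(s*t)*b, ha, ?_, ?_⟩
          · rcases hs with rfl|rfl <;> rcases ht with rfl|rfl <;> rcases hb with rfl|rfl <;> norm_num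
          · funext l
            simp only [Pi.add_apply, Pi.sub_apply, Pi.smul_apply, smul_eq_mul, eps]
            split_ifs <;>
              first
                | ring1
                | (rcases hs with rfl|rfl <;> rcases ht with rfl|rfl <;> ring1)
                | simp_all
        · refine ⟨p, q, hpq, a, b, ha, hb, ?_⟩
          funext l
          simp only [Pi.add_apply, Pi.sub_apply, Pi.smul_apply, smul_eq_mul, eps]
          split_ifs <;>
            first
              | ring1
              | (rcases hs with rfl|rfl <;> rcases ht with rfl|rfl <;> ring1)
              | simp_all

lemma droots_iff {n : ℕ} (v : Fin (n + 1) → ℝ) : v ∈ Droots n ↔ IsRt (n + 1) v := by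
  constructor
  · rintro ⟨i, j, hij, h | h | h | h⟩ <;> subst h
    · exact ⟨i, j, hij.ne, -1, 1, by norm_num, by norm_num, by module⟩
    · exact ⟨i, j, hij.ne, 1, -1, by norm_num, by norm_num, by module⟩
    · exact ⟨i, j, hij.ne, 1, 1, by norm_num, by norm_num, by module⟩
    · exact ⟨i, j, hij.ne, -1, -1, by norm_num, by norm_num, by module⟩
  · rintro ⟨i, j, hij, s, t, hs, ht, rfl⟩
    rcases lt_or_gt_of_ne hij with h | h
    · rcases hs with rfl | rfl <;> rcases ht with rfl | rfl
      · exact ⟨i, j, h, Or.inr (Or.inr (Or.inl (by module)))⟩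
      · exact ⟨i, j, h, Or.inr (Or.inl (by module))⟩
      · exact ⟨i, j, h, Or.inl (by module)⟩
      · exact ⟨i, j, h, Or.inr (Or.inr (Or.inr (by module)))⟩
    · rcases hs with rfl | rfl <;> rcases ht with rfl | rfl
      · exact ⟨j, i, h, Or.inr (Or.inr (Or.inl (by module)))⟩
      · exact ⟨j, i, h, Or.inl (by module)⟩
      · exact ⟨j, i, h, Or.inr (Or.inl (by module))⟩
      · exact ⟨j, i, h, Or.inr (Or.inr (Or.inr (by module)))⟩

lemma sigma_formula (σ : (Fin N → ℝ) ≃ₗ[ℝ] (Fin N → ℝ)) (i j : Fin N) (hij : i ≠ j)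
    (s t : ℝ) (hs : s = 1 ∨ s = -1) (ht : t = 1 ∨ t = -1)
    (hσ : ∀ v, σ v = v - ((2 * ∑ l, v l * (s • eps N i + t • eps N j) l) /
      (∑ l, (s • eps N i + t • eps N j) l * (s • eps N i + t • eps N j) l)) •
      (s • eps N i + t • eps N j)) (v : Fin N → ℝ) :
    σ v = v - (s * v i + t * v j) • (s • eps N i + t • eps N j) := by
  rw [hσ v, sum_mul_gamma i j hij, gamma_sq i j hij s t hs ht]
  have : (2 * (s * v i + t * v j)) / 2 = s * v i + t * v j := by ring
  rw [this]

lemma sigma_invol (σ : (Fin N → ℝ) ≃ₗ[ℝ] (Fin N → ℝ)) (i j : Fin N) (hij : i ≠ j)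
    (s t : ℝ) (hs : s = 1 ∨ s = -1) (ht : t = 1 ∨ t = -1)
    (hf : ∀ v, σ v = v - (s * v i + t * v j) • (s • eps N i + t • eps N j)) :
    σ * σ = 1 := by
  refine LinearEquiv.ext fun v => ?_
  show σ (σ v) = v
  rw [hf, hf]
  funext l
  simp only [Pi.add_apply, Pi.sub_apply, Pi.smul_apply, smul_eq_mul, eps]
  split_ifs <;>
    first
      | ring1
      | (rcases hs with rfl|rfl <;> rcases ht with rfl|rfl <;> ring1)
      | simp_all

lemma weyl_stab {n : ℕ} (w : (Fin (n + 1) → ℝ) ≃ₗ[ℝ] (Fin (n + 1) → ℝ)) (hw : w ∈ DWeyl n) :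
    ∀ v ∈ Droots n, w v ∈ Droots n := by
  suffices H : (∀ v ∈ Droots n, w v ∈ Droots n) ∧ (∀ v ∈ Droots n, w⁻¹ v ∈ Droots n) from H.1
  refine Subgroup.closure_induction ?_ ?_ ?_ ?_ hw
  · rintro σ ⟨γ, hγ, hform⟩
    obtain ⟨i, j, hij, s, t, hs, ht, rfl⟩ := (droots_iff γ).mp hγ
    have hf : ∀ v, σ v = v - (s * v i + t * v j) • (s • eps (n+1) i + t • eps (n+1) j) :=
      sigma_formula σ i j hij s t hs ht hform
    have hprev : ∀ v ∈ Droots n, σ v ∈ Droots n := by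
      intro v hv
      rw [droots_iff, hf v]
      exact refl_isRt i j hij s t hs ht v ((droots_iff v).mp hv)
    have hinv : σ⁻¹ = σ := by
      have h1 : σ * σ = 1 := sigma_invol σ i j hij s t hs ht hf
      exact (eq_inv_of_mul_eq_one_left h1).symm
    exact ⟨hprev, by rw [hinv]; exact hprev⟩
  · exact ⟨fun v hv => hv, fun v hv => by rw [inv_one]; exact hv⟩
  · rintro x y hx hy ⟨px, px'⟩ ⟨py, py'⟩
    refine ⟨fun v hv => px _ (py v hv), fun v hv => ?_⟩
    rw [mul_inv_rev]
    exact py' _ (px' v hv)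
  · rintro x hx ⟨p, p'⟩
    exact ⟨p', fun v hv => by rw [inv_inv]; exact p v hv⟩

lemma htD_eps {n : ℕ} (i : Fin (n + 1)) : htD n (eps (n + 1) i) = (i : ℕ) := by
  simp [htD, eps, ite_mul]

lemma htD_sub {n : ℕ} (u v : Fin (n + 1) → ℝ) : htD n (u - v) = htD n u - htD n v := by
  simp [htD, sub_mul, Finset.sum_sub_distrib]

lemma htD_add {n : ℕ} (u v : Fin (n + 1) → ℝ) : htD n (u + v) = htD n u + htD n v := by
  simp [htD, add_mul, Finset.sum_add_distrib]

end Stmt10Aux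

open Stmt10Aux

/-- let `k ≥ 1` with `3k ≤ n` and set `m = 2k`. Then `R(m)`, the set of
all roots of `D_{n+1}` whose height is divisible by `m`, is not of Levi type: no element
of the Weyl group sends `R(m)` onto `R ∩ span_ℝ(S)` for a subset `S` of the simple roots. -/
theorem stmt10 (n k : ℕ) (hn : 3 ≤ n) (hk : 1 ≤ k) (h3k : 3 * k ≤ n) :
    ∀ w ∈ DWeyl n, ∀ S ⊆ DsimpleSet n,
      (w : (Fin (n + 1) → ℝ) → (Fin (n + 1) → ℝ)) ''
          {v ∈ Droots n | ∃ l : ℤ, htD n v = ((2 * k : ℕ) : ℝ) * l} ≠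
        Droots n ∩ (Submodule.span ℝ S : Submodule ℝ (Fin (n + 1) → ℝ)) := by
  intro w hw S hS heq
  set X : Set (Fin (n + 1) → ℝ) :=
    {v ∈ Droots n | ∃ l : ℤ, htD n v = ((2 * k : ℕ) : ℝ) * l} with hX
  set i0 : Fin (n + 1) := ⟨0, by omega⟩
  set ik : Fin (n + 1) := ⟨k, by omega⟩
  set i2k : Fin (n + 1) := ⟨2 * k, by omega⟩
  set i3k : Fin (n + 1) := ⟨3 * k, by omega⟩
  set v₀ : Fin (n + 1) → ℝ := eps (n + 1) ik - eps (n + 1) i0 with hv₀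
  have hv₀R : v₀ ∈ Droots n := ⟨i0, ik, by simp [Fin.lt_def, i0, ik]; omega, Or.inl rfl⟩
  have hv₀ht : htD n v₀ = (k : ℝ) := by
    rw [hv₀, htD_sub, htD_eps, htD_eps]; simp [i0, ik]
  have hv₀X : v₀ ∉ X := by
    rintro ⟨-, l, hl⟩
    rw [hv₀ht] at hl
    have hl' : (k : ℤ) = (2 * k : ℕ) * l := by exact_mod_cast hl
    have hk0 : (k : ℤ) ≠ 0 := by positivity
    have : (k : ℤ) * (2 * l) = (k : ℤ) * 1 := by push_cast at hl' ⊢; linarith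
    have := mul_left_cancel₀ hk0 this
    omega
  -- the four roots in X
  have h01 : i0 < i2k := by simp [Fin.lt_def, i0, i2k]; omega
  have h02 : ik < i3k := by simp [Fin.lt_def, ik, i3k]; omega
  have hγ1 : (eps (n + 1) i2k - eps (n + 1) i0) ∈ X := by
    refine ⟨⟨i0, i2k, h01, Or.inl rfl⟩, 1, ?_⟩
    rw [htD_sub, htD_eps, htD_eps]; simp [i0, i2k]
  have hγ2 : (eps (n + 1) i2k + eps (n + 1) i0) ∈ X := by
    refine ⟨⟨i0, i2k, h01, Or.inr (Or.inr (Or.inl rfl))⟩, 1, ?_⟩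
    rw [htD_add, htD_eps, htD_eps]; simp [i0, i2k]
  have hγ3 : (eps (n + 1) i3k - eps (n + 1) ik) ∈ X := by
    refine ⟨⟨ik, i3k, h02, Or.inl rfl⟩, 1, ?_⟩
    rw [htD_sub, htD_eps, htD_eps]; simp [ik, i3k]; push_cast; ring
  have hγ4 : (eps (n + 1) i3k + eps (n + 1) ik) ∈ X := by
    refine ⟨⟨ik, i3k, h02, Or.inr (Or.inr (Or.inl rfl))⟩, 2, ?_⟩
    rw [htD_add, htD_eps, htD_eps]; simp [ik, i3k]; push_cast; ring
  have hv₀span : v₀ ∈ Submodule.span ℝ X := by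
    have e : v₀ = (1/2 : ℝ) • (eps (n + 1) i2k - eps (n + 1) i0)
        - (1/2 : ℝ) • (eps (n + 1) i2k + eps (n + 1) i0)
        - (1/2 : ℝ) • (eps (n + 1) i3k - eps (n + 1) ik)
        + (1/2 : ℝ) • (eps (n + 1) i3k + eps (n + 1) ik) := by
      rw [hv₀]; module
    rw [e]
    exact Submodule.add_mem _
      (Submodule.sub_mem _
        (Submodule.sub_mem _
          (Submodule.smul_mem _ _ (Submodule.subset_span hγ1))
          (Submodule.smul_mem _ _ (Submodule.subset_span hγ2)))
        (Submodule.smul_mem _ _ (Submodule.subset_span hγ3)))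
      (Submodule.smul_mem _ _ (Submodule.subset_span hγ4))
  -- now push through w
  have hmap : w v₀ ∈ Submodule.span ℝ ((w : (Fin (n + 1) → ℝ) → (Fin (n + 1) → ℝ)) '' X) := by
    rw [show ((w : (Fin (n + 1) → ℝ) → (Fin (n + 1) → ℝ)) '' X)
        = (w.toLinearMap : (Fin (n + 1) → ℝ) →ₗ[ℝ] (Fin (n + 1) → ℝ)) '' X by rfl,
      Submodule.span_image]
    exact ⟨v₀, hv₀span, rfl⟩
  rw [heq] at hmap
  have hspanS : w v₀ ∈ Submodule.span ℝ S := by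
    have hle : Submodule.span ℝ (Droots n ∩ (Submodule.span ℝ S : Submodule ℝ _))
        ≤ Submodule.span ℝ S := by
      rw [Submodule.span_le]
      intro x hx
      exact hx.2
    exact hle hmap
  have hwR : w v₀ ∈ Droots n := weyl_stab w hw v₀ hv₀R
  have : w v₀ ∈ (w : (Fin (n + 1) → ℝ) → (Fin (n + 1) → ℝ)) '' X := by
    rw [heq]; exact ⟨hwR, hspanS⟩
  obtain ⟨u, huX, hu⟩ := this
  have : u = v₀ := w.injective hu
  exact hv₀X (this ▸ huX)
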